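/- The number of Dyck paths of length 2(n+1) with a distinguished symmetric peak of weight 1 equals the number of pairs (F, D), where F is either the empty path or a free Dyck path (from (0,0) to (2m,0), allowed to go below the x-axis) starting with ud, D is a Dyck path, and the total length of F and D is 2n. -/

import Mathlib

/-- A path (`true` = up step, `false` = down step) never goes below the x-axis. -/
def DyckNonneg (p : List Bool) : Prop :=
  ∀ q : List Bool, q <+: p → q.count false ≤ q.count true

/-- `p` is a Dyck path. -/
def IsDyck (p : List Bool) : Prop :=
  DyckNonneg p ∧ p.count true = p.count false

/-- Dyck paths of length `m` with a distinguished symmetric peak of weight 1: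
a decomposition `A ++ [u, d] ++ B` where `A` does not end with an up step and
`B` does not start with a down step (so the mountain `ud` is maximal). -/
def SymPeak1Marked (m : ℕ) : Type :=
  { q : List Bool × List Bool //
      q.1.getLast? ≠ some true ∧
      q.2.head? ≠ some false ∧
      IsDyck (q.1 ++ [true, false] ++ q.2) ∧
      (q.1 ++ [true, false] ++ q.2).length = m }

/-- Pairs (F, D) where F is empty or a free Dyck path (equal numbers of up and
down steps, may go below the x-axis) starting with `ud`, D is a Dyck path, and the
total length of F and D is `m`. -/
def FreePairs (m : ℕ) : Type :=
  { q : List Bool × List Bool //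
      (q.1 = [] ∨ (q.1.count true = q.1.count false ∧ [true, false] <+: q.1)) ∧
      IsDyck q.2 ∧
      q.1.length + q.2.length = m }

namespace SPAux

def step (b : Bool) : ℤ := if b then 1 else -1

def ht (p : List Bool) : ℤ := (p.map step).sum

@[simp] lemma ht_nil : ht ([] : List Bool) = 0 := rfl
@[simp] lemma ht_cons (b : Bool) (p : List Bool) : ht (b :: p) = step b + ht p := by
  simp [ht]
@[simp] lemma ht_append (a b : List Bool) : ht (a ++ b) = ht a + ht b := by
  simp [ht]

lemma ht_count (p : List Bool) : ht p = (p.count true : ℤ) - (p.count false : ℤ) := by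
  induction p with
  | nil => simp
  | cons b t ih =>
    cases b <;> simp [List.count_cons, ih, step] <;> push_cast <;> ring

def NN (p : List Bool) : Prop := ∀ q, q <+: p → 0 ≤ ht q

lemma dyckNonneg_iff (p : List Bool) : DyckNonneg p ↔ NN p := by
  constructor <;> intro h q hq <;> have := h q hq <;>
    [skip; skip] <;> rw [ht_count] at * <;> omega

lemma isDyck_iff (p : List Bool) : IsDyck p ↔ NN p ∧ ht p = 0 := by
  unfold IsDyck
  rw [dyckNonneg_iff, ht_count]
  constructor <;> intro ⟨h1, h2⟩ <;> exact ⟨h1, by omega⟩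

lemma counts_iff (p : List Bool) : p.count true = p.count false ↔ ht p = 0 := by
  rw [ht_count]; omega

lemma nn_prefix {p q : List Bool} (h : NN p) (hq : q <+: p) : NN q :=
  fun r hr => h r (hr.trans hq)

lemma prefix_append_cases {q a b : List Bool} (h : q <+: a ++ b) :
    q <+: a ∨ ∃ t, t <+: b ∧ q = a ++ t := by
  induction a generalizing q with
  | nil => exact .inr ⟨q, by simpa using h, rfl⟩
  | cons x a ih =>
    cases q with
    | nil => exact .inl List.nil_prefix
    | cons y q =>
      rw [List.cons_append, List.cons_prefix_cons] at h
      obtain ⟨rfl, h⟩ := h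
      rcases ih h with h' | ⟨t, ht', rfl⟩
      · exact .inl (List.cons_prefix_cons.mpr ⟨rfl, h'⟩)
      · exact .inr ⟨t, ht', rfl⟩

def LB (c : ℤ) (p : List Bool) : Prop := ∀ q, q <+: p → 0 ≤ c + ht q

lemma lb_nil {c : ℤ} (hc : 0 ≤ c) : LB c [] := by
  intro q hq; rw [List.prefix_nil] at hq; subst hq; simpa

lemma lb_cons {c : ℤ} {b : Bool} {t : List Bool} :
    LB c (b :: t) ↔ 0 ≤ c ∧ LB (c + step b) t := by
  constructor
  · intro h
    refine ⟨by simpa using h [] List.nil_prefix, fun q hq => ?_⟩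
    have := h (b :: q) (List.cons_prefix_cons.mpr ⟨rfl, hq⟩)
    rw [ht_cons] at this; omega
  · rintro ⟨h0, h⟩ q hq
    cases q with
    | nil => simpa
    | cons y q =>
      rw [List.cons_prefix_cons] at hq
      obtain ⟨rfl, hq⟩ := hq
      have := h q hq
      rw [ht_cons]; omega

lemma lb_append {c : ℤ} {a b : List Bool} :
    LB c (a ++ b) ↔ LB c a ∧ LB (c + ht a) b := by
  constructor
  · intro h
    refine ⟨fun q hq => h q (hq.trans (a.prefix_append b)), fun q hq => ?_⟩
    obtain ⟨t, rfl⟩ := hq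
    have := h (a ++ q) ⟨t, by simp⟩
    rw [ht_append] at this; omega
  · rintro ⟨h1, h2⟩ q hq
    rcases prefix_append_cases hq with h | ⟨t, ht', rfl⟩
    · exact h1 q h
    · have := h2 t ht'
      rw [ht_append]; omega

lemma nn_iff_lb {p : List Bool} : NN p ↔ LB 0 p := by
  unfold NN LB; simp

lemma lb_of_nn {c : ℤ} {p : List Bool} (h : NN p) (hc : 0 ≤ c) : LB c p :=
  fun q hq => by have := h q hq; omega

def mn : List Bool → ℤ
  | [] => 0
  | b :: t => min 0 (step b + mn t)

@[simp] lemma mn_nil : mn [] = 0 := rfl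

lemma mn_nonpos (p : List Bool) : mn p ≤ 0 := by
  cases p with
  | nil => simp
  | cons b t => simp [mn]

lemma mn_le {p q : List Bool} (h : q <+: p) : mn p ≤ ht q := by
  induction p generalizing q with
  | nil => rw [List.prefix_nil] at h; subst h; simp
  | cons b t ih =>
    cases q with
    | nil => simpa using mn_nonpos (b :: t)
    | cons y q =>
      rw [List.cons_prefix_cons] at h
      obtain ⟨rfl, h⟩ := h
      have := ih h
      rw [ht_cons]
      simp only [mn]
      refine le_trans (min_le_right _ _) ?_
      omega

lemma mn_attained (p : List Bool) : ∃ q, q <+: p ∧ ht q = mn p := by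
  induction p with
  | nil => exact ⟨[], List.nil_prefix, rfl⟩
  | cons b t ih =>
    obtain ⟨q, hq, hht⟩ := ih
    by_cases hc : 0 ≤ step b + mn t
    · refine ⟨[], List.nil_prefix, ?_⟩
      simp [mn]; omega
    · refine ⟨b :: q, List.cons_prefix_cons.mpr ⟨rfl, hq⟩, ?_⟩
      rw [ht_cons, hht]
      simp [mn]; omega

lemma nn_iff_mn {p : List Bool} : NN p ↔ mn p = 0 := by
  constructor
  · intro h
    obtain ⟨q, hq, hht⟩ := mn_attained p
    have := h q hq
    have := mn_nonpos p
    omega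
  · intro h q hq
    have := mn_le hq
    omega

def rc (p : List Bool) : List Bool := (p.reverse).map not

@[simp] lemma rc_nil : rc [] = [] := rfl
lemma rc_append (a b : List Bool) : rc (a ++ b) = rc b ++ rc a := by simp [rc]
lemma rc_cons (b : Bool) (t : List Bool) : rc (b :: t) = rc t ++ [!b] := by simp [rc]
@[simp] lemma rc_rc (p : List Bool) : rc (rc p) = p := by
  simp [rc, List.map_reverse, List.reverse_reverse, List.map_map, Function.comp_def, Bool.not_not]
@[simp] lemma length_rc (p : List Bool) : (rc p).length = p.length := by simp [rc]
@[simp] lemma ht_rc (p : List Bool) : ht (rc p) = - ht p := by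
  induction p with
  | nil => simp
  | cons b t ih =>
    rw [rc_cons]
    cases b <;> simp [ih, step]

lemma rc_injective : Function.Injective rc := fun a b h => by
  rw [← rc_rc a, h, rc_rc]

lemma nn_rc {p : List Bool} (h1 : NN p) (h2 : ht p = 0) : NN (rc p) := by
  intro q hq
  obtain ⟨t, hqt⟩ := hq
  have hp : rc t ++ rc q = p := by rw [← rc_append, hqt, rc_rc]
  have h3 : 0 ≤ ht (rc t) := h1 _ ⟨rc q, hp⟩
  have h4 := congrArg ht hp
  rw [ht_append, h2] at h4
  have h5 := ht_rc q
  omega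

end SPAux

namespace SPAux

def lms : List Bool → List Bool × List Bool
  | [] => ([], [])
  | b :: t => if b = true ∧ mn t = 0 then ([], b :: t)
      else (b :: (lms t).1, (lms t).2)

lemma lms_append (G : List Bool) : (lms G).1 ++ (lms G).2 = G := by
  induction G with
  | nil => rfl
  | cons b t ih =>
    by_cases h : b = true ∧ mn t = 0 <;> simp [lms, h, ih]

lemma lms_ht (G : List Bool) : ht (lms G).1 = mn G := by
  induction G with
  | nil => rfl
  | cons b t ih =>
    by_cases h : b = true ∧ mn t = 0
    · obtain ⟨rfl, h2⟩ := h
      simp [lms, h2, mn, step]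
    · have hb : step b + mn t ≤ 0 := by
        have := mn_nonpos t
        cases b with
        | false => simp [step]; omega
        | true =>
          simp only [true_and] at h
          simp [step]; omega
      simp only [lms, if_neg h, ht_cons, ih, mn]
      omega

lemma lms_snd (G : List Bool) :
    (lms G).2 = [] ∨ ∃ Z, (lms G).2 = true :: Z ∧ mn Z = 0 := by
  induction G with
  | nil => exact .inl rfl
  | cons b t ih =>
    by_cases h : b = true ∧ mn t = 0
    · obtain ⟨rfl, h2⟩ := h
      exact .inr ⟨t, by simp [lms, h2], h2⟩
    · simpa [lms, h] using ih

lemma lms_key (X Z : List Bool) (hpre : ∀ x, x <+: X → ht X ≤ ht x)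
    (hX : ht X ≤ 0) (hZ : mn Z = 0) : lms (X ++ true :: Z) = (X, true :: Z) := by
  induction X with
  | nil =>
    show lms (true :: Z) = ([], true :: Z)
    simp [lms, hZ]
  | cons b X' ih =>
    have hnotif : ¬ (b = true ∧ mn (X' ++ true :: Z) = 0) := by
      rintro ⟨rfl, hmn⟩
      have h1 : 0 ≤ ht X' := (nn_iff_mn.mpr hmn) X' (X'.prefix_append _)
      rw [ht_cons] at hX
      simp [step] at hX
      omega
    have hpre' : ∀ x, x <+: X' → ht X' ≤ ht x := by
      intro x hx
      have := hpre (b :: x) (List.cons_prefix_cons.mpr ⟨rfl, hx⟩)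
      rw [ht_cons, ht_cons] at this
      omega
    have hX' : ht X' ≤ 0 := by
      cases b with
      | true => rw [ht_cons] at hX; simp [step] at hX; omega
      | false =>
        have := hpre [false] (List.cons_prefix_cons.mpr ⟨rfl, List.nil_prefix⟩)
        rw [ht_cons] at this hX
        simp [step, ht_cons] at this hX
        omega
    have ih' := ih hpre' hX' 
    rw [List.cons_append, lms, if_neg hnotif, ih']

end SPAux

namespace SPAux

def fsp : ℕ → List Bool → List Bool × List Bool
  | _, [] => ([], [])
  | 0, false :: t => ([false], t)
  | (k+1), false :: t => (false :: (fsp k t).1, (fsp k t).2)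
  | k, true :: t => (true :: (fsp (k+1) t).1, (fsp (k+1) t).2)

@[simp] lemma step_true : step true = 1 := rfl
@[simp] lemma step_false : step false = -1 := rfl

@[simp] lemma fsp_nil (k : ℕ) : fsp k [] = ([], []) := by cases k <;> rfl
@[simp] lemma fsp_zero_false (t : List Bool) : fsp 0 (false :: t) = ([false], t) := rfl
@[simp] lemma fsp_succ_false (k : ℕ) (t : List Bool) :
    fsp (k+1) (false :: t) = (false :: (fsp k t).1, (fsp k t).2) := rfl
@[simp] lemma fsp_true (k : ℕ) (t : List Bool) :
    fsp k (true :: t) = (true :: (fsp (k+1) t).1, (fsp (k+1) t).2) := by cases k <;> rfl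

lemma fsp_key (V : List Bool) (k : ℕ) (Z : List Bool)
    (hpre : ∀ v, v <+: V → -(k : ℤ) ≤ ht v) (hV : ht V = -(k : ℤ)) :
    fsp k (V ++ false :: Z) = (V ++ [false], Z) := by
  induction V generalizing k with
  | nil =>
    have hk : k = 0 := by simpa using hV.symm
    subst hk
    simp
  | cons b V' ih =>
    cases b with
    | true =>
      rw [List.cons_append, fsp_true]
      have ih' := ih (k+1)
        (fun v hv => by
          have := hpre (true :: v) (List.cons_prefix_cons.mpr ⟨rfl, hv⟩)
          rw [ht_cons] at this
          rw [step_true] at this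
          push_cast
          omega)
        (by rw [ht_cons] at hV; rw [step_true] at hV; push_cast; omega)
      rw [ih']
      simp
    | false =>
      have hk : 1 ≤ k := by
        have := hpre [false] (List.cons_prefix_cons.mpr ⟨rfl, List.nil_prefix⟩)
        have h2 : ht [false] = -1 := by simp [step]
        rw [h2] at this
        omega
      obtain ⟨k', rfl⟩ : ∃ k', k = k' + 1 := ⟨k - 1, by omega⟩
      rw [List.cons_append, fsp_succ_false]
      have ih' := ih k'
        (fun v hv => by
          have := hpre (false :: v) (List.cons_prefix_cons.mpr ⟨rfl, hv⟩)
          rw [ht_cons] at this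
          rw [step_false] at this
          push_cast at this ⊢
          omega)
        (by rw [ht_cons] at hV; rw [step_false] at hV; push_cast at hV ⊢; omega)
      rw [ih']
      simp

lemma fsp_exist (G : List Bool) (k : ℕ) (h : mn G < -(k : ℤ)) :
    (fsp k G).1 ++ (fsp k G).2 = G ∧ ht (fsp k G).1 = -(k : ℤ) - 1 ∧
    (∀ x, x <+: (fsp k G).1 → x ≠ (fsp k G).1 → -(k : ℤ) ≤ ht x) ∧
    ∃ X', (fsp k G).1 = X' ++ [false] := by
  induction G generalizing k with
  | nil =>
    exfalso
    simp only [mn_nil] at h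
    have : (0:ℤ) ≤ (k:ℤ) := Int.natCast_nonneg k
    omega
  | cons b t ih =>
    cases b with
    | false =>
      cases k with
      | zero =>
        rw [fsp_zero_false]
        refine ⟨rfl, by simp [step], ?_, ⟨[], rfl⟩⟩
        intro x hx hne
        cases x with
        | nil => simp
        | cons y x' =>
          rw [List.cons_prefix_cons] at hx
          obtain ⟨rfl, hx⟩ := hx
          rw [List.prefix_nil] at hx
          subst hx
          exact absurd rfl hne
      | succ k' =>
        have hmt : mn t < -(k' : ℤ) := by
          have h1 : mn (false :: t) = min 0 (-1 + mn t) := by simp [mn, step]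
          rw [h1] at h
          push_cast at h ⊢
          omega
        obtain ⟨h1, h2, h3, X'', hX''⟩ := ih k' hmt
        rw [fsp_succ_false]
        refine ⟨by rw [List.cons_append, h1], ?_, ?_, ⟨false :: X'', by rw [List.cons_append, hX'']⟩⟩
        · rw [ht_cons, h2]
          rw [step_false]
          push_cast
          ring
        · intro x hx hne
          cases x with
          | nil => rw [ht_nil]; omega
          | cons y x' =>
            rw [List.cons_prefix_cons] at hx
            obtain ⟨rfl, hx⟩ := hx
            have hne' : x' ≠ (fsp k' t).1 := fun hh => hne (by rw [hh])
            have := h3 x' hx hne'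
            rw [ht_cons, step_false]
            push_cast at this ⊢
            omega
    | true =>
      have hmt : mn t < -((k+1 : ℕ) : ℤ) := by
        have h1 : mn (true :: t) = min 0 (1 + mn t) := by simp [mn, step]
        rw [h1] at h
        have hk : (0:ℤ) ≤ (k:ℤ) := Int.natCast_nonneg k
        push_cast at h ⊢
        omega
      obtain ⟨h1, h2, h3, X'', hX''⟩ := ih (k+1) hmt
      rw [fsp_true]
      refine ⟨by rw [List.cons_append, h1], ?_, ?_, ⟨true :: X'', by rw [List.cons_append, hX'']⟩⟩
      · rw [ht_cons, h2]
        rw [step_true]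
        push_cast
        ring
      · intro x hx hne
        cases x with
        | nil => rw [ht_nil]; omega
        | cons y x' =>
          rw [List.cons_prefix_cons] at hx
          obtain ⟨rfl, hx⟩ := hx
          have hne' : x' ≠ (fsp (k+1) t).1 := fun hh => hne (by rw [hh])
          have := h3 x' hx hne'
          rw [ht_cons, step_true]
          push_cast at this ⊢
          omega

lemma uniq {a1 w1 a2 w2 : List Bool} (hw1 : NN w1) (h1 : ht w1 = 0)
    (hw2 : NN w2) (h2 : ht w2 = 0)
    (h : a1 ++ true :: (w1 ++ [false]) = a2 ++ true :: (w2 ++ [false])) :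
    a1 = a2 ∧ w1 = w2 := by
  have hshape : ∀ (a w : List Bool), a ++ true :: (w ++ [false]) = (a ++ true :: w) ++ [false] := by
    intro a w; simp
  rw [hshape, hshape] at h
  have hd : a1 ++ true :: w1 = a2 ++ true :: w2 := by
    have := congrArg List.dropLast h
    rwa [List.dropLast_concat, List.dropLast_concat] at this
  have hr := congrArg rc hd
  have hrc : ∀ (a w : List Bool), rc (a ++ true :: w) = rc w ++ false :: rc a := by
    intro a w
    rw [rc_append, rc_cons]
    simp
  rw [hrc, hrc] at hr
  have e1 := fsp_key (rc w1) 0 (rc a1) (fun v hv => by simpa using nn_rc hw1 h1 v hv)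
    (by simp [h1])
  have e2 := fsp_key (rc w2) 0 (rc a2) (fun v hv => by simpa using nn_rc hw2 h2 v hv)
    (by simp [h2])
  rw [hr] at e1
  have e := e1.symm.trans e2
  have e3 := congrArg Prod.fst e
  have e4 := congrArg Prod.snd e
  simp only at e3 e4
  have ew : rc w1 = rc w2 := by
    have := congrArg List.dropLast e3
    rwa [List.dropLast_concat, List.dropLast_concat] at this
  exact ⟨rc_injective e4, rc_injective ew⟩

end SPAux

namespace SPAux

def psiF (q : List Bool × List Bool) : List Bool × List Bool :=
  if q.1 = [] then ([], q.2)
  else if mn (q.1.drop 2) = 0 then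
    (rc (q.1.drop 2) ++ true :: (q.2 ++ [false]), [])
  else
    ((lms (q.1.drop 2)).2.tail ++ true :: (q.2 ++ [false]), true :: (lms (q.1.drop 2)).1)

lemma dyck_head {p : List Bool} (h : NN p) : p.head? ≠ some false := by
  cases p with
  | nil => simp
  | cons b t =>
    cases b with
    | false =>
      have := h [false] (List.cons_prefix_cons.mpr ⟨rfl, List.nil_prefix⟩)
      rw [ht_cons, step_false, ht_nil] at this
      omega
    | true => simp

lemma psiF_mem {n : ℕ} (q : List Bool × List Bool)
    (hq : (q.1 = [] ∨ (q.1.count true = q.1.count false ∧ [true, false] <+: q.1)) ∧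
      IsDyck q.2 ∧ q.1.length + q.2.length = 2 * n) :
    (psiF q).1.getLast? ≠ some true ∧
    (psiF q).2.head? ≠ some false ∧
    IsDyck ((psiF q).1 ++ [true, false] ++ (psiF q).2) ∧
    ((psiF q).1 ++ [true, false] ++ (psiF q).2).length = 2 * (n + 1) := by
  obtain ⟨hF, hD, hlen⟩ := hq
  obtain ⟨hDnn, hDht⟩ := (isDyck_iff _).mp hD
  by_cases hF0 : q.1 = []
  · simp only [psiF, if_pos hF0]
    refine ⟨by simp, dyck_head hDnn, ?_, ?_⟩
    · rw [isDyck_iff]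
      constructor
      · rw [nn_iff_lb]
        simp only [List.nil_append, List.cons_append]
        refine lb_cons.mpr ⟨by norm_num, lb_cons.mpr ⟨by norm_num, ?_⟩⟩
        exact lb_of_nn hDnn (by simp)
      · simp only [List.nil_append, ht_append, ht_cons, ht_nil, step_true, step_false, hDht]
        ring
    · have : q.1.length = 0 := by rw [hF0]; rfl
      simp only [List.length_append, List.length_cons, List.length_nil]
      omega
  · obtain ⟨hbal, hpre⟩ := hF.resolve_left hF0
    obtain ⟨G, hG⟩ := hpre
    have hdrop : q.1.drop 2 = G := by rw [← hG]; simp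
    have hlG : q.1.length = 2 + G.length := by rw [← hG]; simp; omega
    have htG : ht G = 0 := by
      have h1 : ht q.1 = 0 := (counts_iff _).mp hbal
      rw [← hG, ht_append, ht_cons, ht_cons, ht_nil, step_true, step_false] at h1
      omega
    by_cases hmn : mn G = 0
    · simp only [psiF, if_neg hF0, hdrop, if_pos hmn]
      have hGnn := nn_iff_mn.mpr hmn
      have hrc := nn_rc hGnn htG
      have e1 : ht (rc G) = 0 := by rw [ht_rc, htG]; ring
      refine ⟨?_, by simp, ?_, ?_⟩
      · have hsh : rc G ++ true :: (q.2 ++ [false]) = (rc G ++ true :: q.2) ++ [false] := by simp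
        rw [hsh, List.getLast?_concat]
        simp
      · rw [isDyck_iff]
        constructor
        · rw [nn_iff_lb]
          simp only [List.append_assoc, List.cons_append, List.append_nil, List.nil_append]
          refine lb_append.mpr ⟨lb_of_nn hrc le_rfl, ?_⟩
          rw [e1]
          refine lb_cons.mpr ⟨by norm_num, ?_⟩
          refine lb_append.mpr ⟨lb_of_nn hDnn (by norm_num), ?_⟩
          rw [hDht]
          refine lb_cons.mpr ⟨by norm_num, lb_cons.mpr ⟨by norm_num,
            lb_cons.mpr ⟨by norm_num, lb_nil (by norm_num)⟩⟩⟩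
        · simp only [ht_append, ht_cons, ht_nil, step_true, step_false, ht_rc, htG, hDht]
          ring
      · simp only [List.length_append, List.length_cons, List.length_nil, length_rc]
        omega
    · rcases lms_snd G with h0 | ⟨Z, hY2, hZ⟩
      · exfalso
        have e := lms_append G
        rw [h0, List.append_nil] at e
        have e2 := lms_ht G
        rw [e, htG] at e2
        exact hmn e2.symm
      · have happ := lms_append G
        have hhtX := lms_ht G
        have hmn' : mn G < 0 := lt_of_le_of_ne (mn_nonpos G) hmn
        have hhtZ : ht (lms G).1 + 1 + ht Z = 0 := by
          have e := congrArg ht happ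
          rw [ht_append, hY2, ht_cons, step_true, htG] at e
          omega
        have hZnn := nn_iff_mn.mpr hZ
        have hc : 0 ≤ ht Z := by omega
        simp only [psiF, if_neg hF0, hdrop, if_neg hmn, hY2, List.tail_cons]
        refine ⟨?_, by simp, ?_, ?_⟩
        · have hsh : Z ++ true :: (q.2 ++ [false]) = (Z ++ true :: q.2) ++ [false] := by simp
          rw [hsh, List.getLast?_concat]
          simp
        · rw [isDyck_iff]
          constructor
          · rw [nn_iff_lb]
            simp only [List.append_assoc, List.cons_append, List.nil_append]
            refine lb_append.mpr ⟨lb_of_nn hZnn le_rfl, ?_⟩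
            refine lb_cons.mpr ⟨by omega, ?_⟩
            refine lb_append.mpr ⟨lb_of_nn hDnn (by simp only [step_true, step_false]; omega), ?_⟩
            rw [hDht]
            refine lb_cons.mpr ⟨by simp only [step_true, step_false]; omega,
              lb_cons.mpr ⟨by simp only [step_true, step_false]; omega,
              lb_cons.mpr ⟨by simp only [step_true, step_false]; omega,
              lb_cons.mpr ⟨by simp only [step_true, step_false]; omega, ?_⟩⟩⟩⟩
            intro x hx
            have hxG : x <+: G := hx.trans (⟨(lms G).2, happ⟩ : (lms G).1 <+: G)
            have := mn_le hxG
            simp only [step_true, step_false]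
            omega
          · simp only [ht_append, ht_cons, ht_nil, step_true, step_false, hDht]
            omega
        · have hlen2 : G.length = (lms G).1.length + 1 + Z.length := by
            have := congrArg List.length happ
            rw [List.length_append, hY2, List.length_cons] at this
            omega
          simp only [List.length_append, List.length_cons, List.length_nil]
          omega

lemma psiF_inj {p q : List Bool × List Bool}
    (hp : (p.1 = [] ∨ (p.1.count true = p.1.count false ∧ [true, false] <+: p.1)) ∧
      IsDyck p.2)
    (hq : (q.1 = [] ∨ (q.1.count true = q.1.count false ∧ [true, false] <+: q.1)) ∧
      IsDyck q.2)
    (h : psiF p = psiF q) : p = q := by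
  obtain ⟨hp1, hpD⟩ := hp
  obtain ⟨hq1, hqD⟩ := hq
  obtain ⟨hpDnn, hpDht⟩ := (isDyck_iff _).mp hpD
  obtain ⟨hqDnn, hqDht⟩ := (isDyck_iff _).mp hqD
  by_cases hp0 : p.1 = [] <;> by_cases hq0 : q.1 = []
  · simp only [psiF, if_pos hp0, if_pos hq0] at h
    have h2 := congrArg Prod.snd h
    simp only at h2
    exact Prod.ext (hp0.trans hq0.symm) h2
  · exfalso
    simp only [psiF, if_pos hp0, if_neg hq0] at h
    have h1 := congrArg Prod.fst h
    by_cases hm : mn (q.1.drop 2) = 0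
    · rw [if_pos hm] at h1
      simp only at h1
      exact absurd h1.symm (by simp)
    · rw [if_neg hm] at h1
      simp only at h1
      exact absurd h1.symm (by simp)
  · exfalso
    simp only [psiF, if_neg hp0, if_pos hq0] at h
    have h1 := congrArg Prod.fst h
    by_cases hm : mn (p.1.drop 2) = 0
    · rw [if_pos hm] at h1
      simp only at h1
      exact absurd h1 (by simp)
    · rw [if_neg hm] at h1
      simp only at h1
      exact absurd h1 (by simp)
  · obtain ⟨hbp, hprep⟩ := hp1.resolve_left hp0
    obtain ⟨Gp, hGp⟩ := hprep
    obtain ⟨hbq, hpreq⟩ := hq1.resolve_left hq0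
    obtain ⟨Gq, hGq⟩ := hpreq
    have hdp : p.1.drop 2 = Gp := by rw [← hGp]; simp
    have hdq : q.1.drop 2 = Gq := by rw [← hGq]; simp
    have htGp : ht Gp = 0 := by
      have h1 : ht p.1 = 0 := (counts_iff _).mp hbp
      rw [← hGp, ht_append, ht_cons, ht_cons, ht_nil, step_true, step_false] at h1
      omega
    have htGq : ht Gq = 0 := by
      have h1 : ht q.1 = 0 := (counts_iff _).mp hbq
      rw [← hGq, ht_append, ht_cons, ht_cons, ht_nil, step_true, step_false] at h1
      omega
    simp only [psiF, if_neg hp0, if_neg hq0, hdp, hdq] at h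
    by_cases hmp : mn Gp = 0 <;> by_cases hmq : mn Gq = 0
    · rw [if_pos hmp, if_pos hmq] at h
      have h1 := congrArg Prod.fst h
      simp only at h1
      obtain ⟨e1, e2⟩ := uniq hpDnn hpDht hqDnn hqDht h1
      have eG : Gp = Gq := rc_injective e1
      exact Prod.ext (by rw [← hGp, ← hGq, eG]) e2
    · exfalso
      rw [if_pos hmp, if_neg hmq] at h
      have h2 := congrArg Prod.snd h
      simp at h2
    · exfalso
      rw [if_neg hmp, if_pos hmq] at h
      have h2 := congrArg Prod.snd h
      simp at h2
    · rw [if_neg hmp, if_neg hmq] at h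
      have h2 := congrArg Prod.snd h
      simp only [List.cons.injEq, true_and] at h2
      have h1 := congrArg Prod.fst h
      simp only at h1
      rcases lms_snd Gp with h0p | ⟨Zp, hYp, hZp⟩
      · exfalso
        have e := lms_append Gp
        rw [h0p, List.append_nil] at e
        have e2 := lms_ht Gp
        rw [e, htGp] at e2
        exact hmp e2.symm
      rcases lms_snd Gq with h0q | ⟨Zq, hYq, hZq⟩
      · exfalso
        have e := lms_append Gq
        rw [h0q, List.append_nil] at e
        have e2 := lms_ht Gq
        rw [e, htGq] at e2
        exact hmq e2.symm
      rw [hYp, hYq, List.tail_cons, List.tail_cons] at h1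
      obtain ⟨eZ, eD⟩ := uniq hpDnn hpDht hqDnn hqDht h1
      have eG : Gp = Gq := by
        rw [← lms_append Gp, ← lms_append Gq, hYp, hYq, h2, eZ]
      exact Prod.ext (by rw [← hGp, ← hGq, eG]) eD

end SPAux

namespace SPAux

lemma psiF_surj {n : ℕ} (A B : List Bool)
    (h1 : A.getLast? ≠ some true) (h2 : B.head? ≠ some false)
    (h3 : IsDyck (A ++ [true, false] ++ B))
    (h4 : (A ++ [true, false] ++ B).length = 2 * (n + 1)) :
    ∃ p : List Bool × List Bool,
      ((p.1 = [] ∨ (p.1.count true = p.1.count false ∧ [true, false] <+: p.1)) ∧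
        IsDyck p.2 ∧ p.1.length + p.2.length = 2 * n) ∧ psiF p = (A, B) := by
  obtain ⟨hPnn, hPht⟩ := (isDyck_iff _).mp h3
  have hPht' : ht A + ht B = 0 := by
    rw [ht_append, ht_append, ht_cons, ht_cons, ht_nil, step_true, step_false] at hPht
    omega
  have hAnn : NN A := nn_prefix hPnn ⟨[true, false] ++ B, by simp⟩
  have htA0 : 0 ≤ ht A := hAnn A (List.prefix_refl A)
  by_cases hA0 : A = []
  · subst hA0
    refine ⟨([], B), ⟨Or.inl rfl, ?_, ?_⟩, ?_⟩
    · rw [isDyck_iff]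
      refine ⟨fun r hr => ?_, by simpa using hPht'⟩
      have hpr : [true, false] ++ r <+: [] ++ [true, false] ++ B := by
        obtain ⟨t, rfl⟩ := hr
        exact ⟨t, by simp⟩
      have := hPnn _ hpr
      rw [ht_append, ht_cons, ht_cons, ht_nil, step_true, step_false] at this
      omega
    · simp only [List.length_nil]
      simp only [List.length_append, List.length_cons, List.length_nil] at h4
      omega
    · simp [psiF]
  · -- A ends with false
    have hgl : A.getLast hA0 = false := by
      have := List.getLast?_eq_getLast hA0
      cases hb : A.getLast hA0 with
      | true => rw [hb] at this; exact absurd this h1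
      | false => rfl
    have hA : A = A.dropLast ++ [false] := by
      conv_lhs => rw [← List.dropLast_append_getLast hA0]
      rw [hgl]
    have htAd : ht A.dropLast = ht A + 1 := by
      have := congrArg ht hA
      rw [ht_append, ht_cons, ht_nil, step_false] at this
      omega
    have htS : ht (rc A.dropLast) = -(ht A) - 1 := by
      rw [ht_rc, htAd]; ring
    have hmnS : mn (rc A.dropLast) < -((0 : ℕ) : ℤ) := by
      have := mn_le (List.prefix_refl (rc A.dropLast))
      push_cast
      omega
    obtain ⟨hSplit, hhtX, hXpre, X', hX'⟩ := fsp_exist (rc A.dropLast) 0 hmnS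
    have htX : ht (fsp 0 (rc A.dropLast)).1 = -1 := by push_cast at hhtX; omega
    have htX' : ht X' = 0 := by
      have := congrArg ht hX'
      rw [ht_append, ht_cons, ht_nil, step_false, htX] at this
      omega
    have hX'nn : NN X' := by
      intro x hx
      have hxX : x <+: (fsp 0 (rc A.dropLast)).1 := hx.trans ⟨[false], hX'.symm⟩
      have hne : x ≠ (fsp 0 (rc A.dropLast)).1 := by
        intro he
        have l1 := he ▸ (List.IsPrefix.length_le hx)
        rw [hX', List.length_append, List.length_singleton] at l1
        omega
      have := hXpre x hxX hne
      push_cast at this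
      omega
    set W := rc X' with hWdef
    have hWnn : NN W := nn_rc hX'nn htX'
    have htW : ht W = 0 := by rw [hWdef, ht_rc, htX']; ring
    set Y := (fsp 0 (rc A.dropLast)).2 with hYdef
    have hAd2 : A.dropLast = rc Y ++ true :: W := by
      have e2 : rc (X' ++ [false]) = true :: W := by
        rw [rc_append]
        rfl
      calc A.dropLast = rc (rc A.dropLast) := (rc_rc _).symm
        _ = rc ((fsp 0 (rc A.dropLast)).1 ++ Y) := by rw [hSplit]
        _ = rc Y ++ rc (fsp 0 (rc A.dropLast)).1 := rc_append _ _
        _ = rc Y ++ true :: W := by rw [hX', e2]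
    have hAeq : A = rc Y ++ true :: (W ++ [false]) := by
      conv_lhs => rw [hA, hAd2]
      simp
    have hAtnn : NN (rc Y) := by
      refine nn_prefix hAnn ⟨true :: (W ++ [false]), ?_⟩
      rw [← hAeq]
    have htAt : ht (rc Y) = ht A := by
      have := congrArg ht hAeq
      rw [ht_append, ht_cons, step_true, ht_append, htW, ht_cons, ht_nil, step_false] at this
      omega
    cases B with
    | nil =>
      have htA : ht A = 0 := by simpa using hPht'
      have hAtd : ht (rc Y) = 0 := htAt.trans htA
      refine ⟨([true, false] ++ rc (rc Y), W), ⟨Or.inr ⟨?_, ⟨rc (rc Y), rfl⟩⟩,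
        (isDyck_iff _).mpr ⟨hWnn, htW⟩, ?_⟩, ?_⟩
      · rw [counts_iff]
        rw [ht_append, ht_cons, ht_cons, ht_nil, step_true, step_false, ht_rc, hAtd]
        ring
      · have hlA : A.length = Y.length + 1 + W.length + 1 := by
          have := congrArg List.length hAeq
          simp only [List.length_append, List.length_cons, List.length_nil, length_rc] at this
          omega
        have e3 : (rc Y).length = Y.length := length_rc Y
        have e4 : (rc (rc Y)).length = Y.length := by rw [rc_rc]
        simp only [List.length_append, List.length_cons, List.length_nil] at h4 hlA ⊢
        omega
      · have hne : ([true, false] ++ rc (rc Y) : List Bool) ≠ [] := by simp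
        have hdr : (([true, false] ++ rc (rc Y)).drop 2 : List Bool) = rc (rc Y) := by simp
        have hmnAt : mn (rc (rc Y)) = 0 := nn_iff_mn.mp (nn_rc hAtnn hAtd)
        simp only [psiF, hdr, if_neg hne, if_pos hmnAt]
        rw [rc_rc]
        rw [← hAeq]
    | cons b B' =>
      have hb : b = true := by
        cases b with
        | false => exact (h2 rfl).elim
        | true => rfl
      subst hb
      have htB' : ht B' = -(ht A) - 1 := by
        rw [ht_cons, step_true] at hPht'
        omega
      refine ⟨([true, false] ++ (B' ++ true :: rc Y), W), ⟨Or.inr ⟨?_, ⟨_, rfl⟩⟩,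
        (isDyck_iff _).mpr ⟨hWnn, htW⟩, ?_⟩, ?_⟩
      · rw [counts_iff]
        rw [ht_append, ht_cons, ht_cons, ht_nil, step_true, step_false, ht_append,
          ht_cons, step_true, htAt, htB']
        ring
      · have hlA : A.length = Y.length + 1 + W.length + 1 := by
          have := congrArg List.length hAeq
          simp only [List.length_append, List.length_cons, List.length_nil, length_rc] at this
          omega
        have e3 : (rc Y).length = Y.length := length_rc Y
        have e4 : (rc (rc Y)).length = Y.length := by rw [rc_rc]
        simp only [List.length_append, List.length_cons, List.length_nil] at h4 hlA ⊢
        omega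
      · have hne : ([true, false] ++ (B' ++ true :: rc Y) : List Bool) ≠ [] := by simp
        have hdr : (([true, false] ++ (B' ++ true :: rc Y)).drop 2 : List Bool)
            = B' ++ true :: rc Y := by simp
        have hpreB' : ∀ x, x <+: B' → ht B' ≤ ht x := by
          intro x hx
          have hpr : (A ++ [true, false]) ++ (true :: x) <+: A ++ [true, false] ++ (true :: B') := by
            obtain ⟨t, rfl⟩ := hx
            exact ⟨t, by simp⟩
          have := hPnn _ hpr
          rw [ht_append, ht_append, ht_cons, ht_cons, ht_nil, step_true, step_false,
            ht_cons, step_true] at this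
          omega
        have hkey := lms_key B' (rc Y) hpreB' (by omega) (nn_iff_mn.mp hAtnn)
        have hmnG : ¬ mn (B' ++ true :: rc Y) = 0 := by
          have := mn_le ((B'.prefix_append (true :: rc Y)))
          omega
        simp only [psiF, hdr, if_neg hne, if_neg hmnG, hkey, List.tail_cons]
        rw [← hAeq]

end SPAux

def spEquivPsi (n : ℕ) : FreePairs (2 * n) → SymPeak1Marked (2 * (n + 1)) :=
  fun x => ⟨SPAux.psiF x.1, SPAux.psiF_mem x.1 x.2⟩


/-- The number of Dyck paths of length 2(n+1) with a distinguished symmetric peak of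
weight 1 equals the number of pairs (F, D) as above with total length 2n. -/
theorem sym_peak_free_pair_count (n : ℕ) :
    Nat.card (SymPeak1Marked (2 * (n + 1))) = Nat.card (FreePairs (2 * n)) := by
  refine (Nat.card_eq_of_bijective (spEquivPsi n) ⟨?_, ?_⟩).symm
  · intro x y hxy
    apply Subtype.ext
    exact SPAux.psiF_inj ⟨x.2.1, x.2.2.1⟩ ⟨y.2.1, y.2.2.1⟩ (congrArg Subtype.val hxy)
  · intro y
    obtain ⟨⟨A, B⟩, hy1, hy2, hy3, hy4⟩ := y
    obtain ⟨p, hp, heq⟩ := SPAux.psiF_surj (n := n) A B hy1 hy2 hy3 hy4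
    exact ⟨⟨p, hp⟩, Subtype.ext heq⟩
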